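/- arXiv:1105.5535 — 2 statements merged into one kernel-verified Lean document; each statement's English description precedes it below -/
import Mathlib

section
/- Let p = (p0,p1,p2) ∈ [0,1)³ satisfy κ_△(p) = 0. Consider the triangle graph G on vertex set {A,B,C} with edges BC, CA, AB, where independently BC is open with probability p0, CA with probability p1, and AB with probability p2; and the star graph G' on vertex set {A,B,C,O} with edges OA, OB, OC, where independently OA is open with probability 1−p0, OB with probability 1−p1, and OC with probability 1−p2. Then the two random vectors of connectivity indicators (1[x ↔ y in G] : x,y ∈ {A,B,C}) and (1[x ↔ y in G'] : x,y ∈ {A,B,C}) have the same joint law. -/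
open MeasureTheory Set

set_option linter.unusedVariables false

namespace Perc

/-- Points of the plane. -/
abbrev Pt := ℝ × ℝ

/-- A lattice embedded in the plane, with edges indexed by `E`;
each edge is embedded as the segment between the two endpoints given by `ends`. -/
structure LatticeOn (E : Type) where
  ends : E → Pt × Pt

/-- Bond configurations. -/
abbrev Config (E : Type) := E → Bool

/-- `P` is the Bernoulli bond-percolation product measure in which edge `e`
is open with probability `p e`, independently over edges. -/
def IsBernoulliProduct {E : Type} (p : E → ℝ) (P : Measure (Config E)) : Prop :=
  IsProbabilityMeasure P ∧
    ∀ (s : Finset E) (f : E → Bool),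
      P {ω | ∀ e ∈ s, ω e = f e} =
        ∏ e ∈ s, ENNReal.ofReal (if f e then p e else 1 - p e)

/-- The union of the closed segments of the open edges. -/
def openEdgeSet {E : Type} (L : LatticeOn E) (ω : Config E) : Set Pt :=
  ⋃ e ∈ {e : E | ω e = true}, segment ℝ (L.ends e).1 (L.ends e).2

/-- There is an arc, contained in `S` and in the union of the open edges,
with one endpoint in `A` and the other in `B`. -/
def CrossingIn {E : Type} (L : LatticeOn E) (ω : Config E) (S A B : Set Pt) : Prop :=
  ∃ γ : ℝ → Pt, ContinuousOn γ (Icc 0 1) ∧ γ 0 ∈ A ∧ γ 1 ∈ B ∧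
    ∀ t ∈ Icc (0:ℝ) 1, γ t ∈ S ∩ openEdgeSet L ω

/-- Rotation of the plane by angle `θ`. -/
noncomputable def rot (θ : ℝ) (z : Pt) : Pt :=
  (Real.cos θ * z.1 - Real.sin θ * z.2, Real.sin θ * z.1 + Real.cos θ * z.2)

/-- `f` comprises a rotation and a translation. -/
def IsRotTrans (f : Pt → Pt) : Prop := ∃ θ : ℝ, ∃ t : Pt, f = fun z => rot θ z + t

def stdRect (h l : ℝ) : Set Pt := {z | 0 ≤ z.1 ∧ z.1 ≤ h ∧ 0 ≤ z.2 ∧ z.2 ≤ l}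
def leftSide (h l : ℝ) : Set Pt := {z | z.1 = 0 ∧ 0 ≤ z.2 ∧ z.2 ≤ l}
def rightSide (h l : ℝ) : Set Pt := {z | z.1 = h ∧ 0 ≤ z.2 ∧ z.2 ≤ l}
def bottomSide (h l : ℝ) : Set Pt := {z | z.2 = 0 ∧ 0 ≤ z.1 ∧ z.1 ≤ h}
def topSide (h l : ℝ) : Set Pt := {z | z.2 = l ∧ 0 ≤ z.1 ∧ z.1 ≤ h}

/-- The box `f(stdRect h l)` (where `f` is a rotation plus translation) possesses
open crossings in both directions. -/
def HasBoxCrossings {E : Type} (L : LatticeOn E) (ω : Config E) (h l : ℝ) (f : Pt → Pt) : Prop :=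
  CrossingIn L ω (f '' stdRect h l) (f '' leftSide h l) (f '' rightSide h l) ∧
  CrossingIn L ω (f '' stdRect h l) (f '' bottomSide h l) (f '' topSide h l)

/-- The box-crossing property: for every `α > 0` there is `δ > 0` such that every box
of size `αN × N` (any position and orientation) possesses open crossings with
probability at least `δ`, for all large `N`. -/
def BoxCrossingProperty {E : Type} (L : LatticeOn E) (P : Measure (Config E)) : Prop :=
  ∀ α : ℝ, 0 < α → ∃ δ : ℝ, 0 < δ ∧ ∃ N₀ : ℕ, ∀ N : ℕ, N₀ ≤ N →
    ∀ f : Pt → Pt, IsRotTrans f →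
      ENNReal.ofReal δ ≤ P {ω | HasBoxCrossings L ω (α * N) N f}

/-- Horizontal-crossing event of the box `[-m,m] × [0,n]`. -/
def Ch {E : Type} (L : LatticeOn E) (m n : ℝ) (ω : Config E) : Prop :=
  CrossingIn L ω {z | -m ≤ z.1 ∧ z.1 ≤ m ∧ 0 ≤ z.2 ∧ z.2 ≤ n}
    {z | z.1 = -m ∧ 0 ≤ z.2 ∧ z.2 ≤ n} {z | z.1 = m ∧ 0 ≤ z.2 ∧ z.2 ≤ n}

/-- Vertical-crossing event of the box `[-m,m] × [0,n]`. -/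
def Cv {E : Type} (L : LatticeOn E) (m n : ℝ) (ω : Config E) : Prop :=
  CrossingIn L ω {z | -m ≤ z.1 ∧ z.1 ≤ m ∧ 0 ≤ z.2 ∧ z.2 ≤ n}
    {z | z.2 = 0 ∧ -m ≤ z.1 ∧ z.1 ≤ m} {z | z.2 = n ∧ -m ≤ z.1 ∧ z.1 ≤ m}

/-- `u` and `v` are the endpoints of some open edge. -/
def openAdj {E : Type} (L : LatticeOn E) (ω : Config E) (u v : Pt) : Prop :=
  ∃ e, ω e = true ∧ (L.ends e = (u, v) ∨ L.ends e = (v, u))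

/-- `u` and `v` are joined by a path of open edges. -/
def openConn {E : Type} (L : LatticeOn E) (ω : Config E) : Pt → Pt → Prop :=
  Relation.ReflTransGen (openAdj L ω)

/-- The open cluster at `v`. -/
def cluster {E : Type} (L : LatticeOn E) (ω : Config E) (v : Pt) : Set Pt :=
  {u | openConn L ω v u}

/-- The vertex set of the lattice. -/
def vertexSet {E : Type} (L : LatticeOn E) : Set Pt :=
  ⋃ e : E, {(L.ends e).1, (L.ends e).2}

/-- `v` is the endpoint of an infinite open self-avoiding path. -/
def ConnToInfinity {E : Type} (L : LatticeOn E) (ω : Config E) (v : Pt) : Prop :=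
  ∃ γ : ℕ → Pt, γ 0 = v ∧ Function.Injective γ ∧ ∀ n, openAdj L ω (γ n) (γ (n + 1))

/-- Euclidean distance on the plane. -/
noncomputable def edist2 (u v : Pt) : ℝ := Real.sqrt ((u.1 - v.1) ^ 2 + (u.2 - v.2) ^ 2)

/-- `rad (C_v) ≥ r`, where `rad (C_v)` is the supremum of all `x` such that `C_v`
meets the complement of the open Euclidean ball `v + S_x`. -/
def RadiusGE {E : Type} (L : LatticeOn E) (ω : Config E) (v : Pt) (r : ℝ) : Prop :=
  ∀ x : ℝ, x < r → ∃ u ∈ cluster L ω v, x ≤ edist2 v u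

/-- `κ_□`. -/
def kappaS (a b : ℝ) : ℝ := a + b - 1
/-- `κ_△`. -/
def kappaT (a b c : ℝ) : ℝ := a + b + c - a * b * c - 1
/-- `κ_⬡`. -/
def kappaH (a b c : ℝ) : ℝ := -kappaT (1 - a) (1 - b) (1 - c)

/-- Edges of a square-type lattice: `(a, b, true)` is the `horizontal`-class edge
at `(a,b)` and `(a, b, false)` the `vertical`-class edge at `(a,b)`. -/
abbrev SqE := ℤ × ℤ × Bool
/-- Edges of the triangular lattice (also indexing the dual hexagonal edges):
`(a, b, i)` with `i = 0` horizontal, `i = 1` the right edge of an upwards pointing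
triangle, `i = 2` the left edge of an upwards pointing triangle, in row `b`. -/
abbrev TriE := ℤ × ℤ × Fin 3

/-- The unit square lattice, with vertex set `ℤ²`. -/
noncomputable def sqLattice : LatticeOn SqE :=
  ⟨fun e =>
    if e.2.2 then (((e.1 : ℝ), (e.2.1 : ℝ)), ((e.1 : ℝ) + 1, (e.2.1 : ℝ)))
    else (((e.1 : ℝ), (e.2.1 : ℝ)), ((e.1 : ℝ), (e.2.1 : ℝ) + 1))⟩

/-- The dual of the unit square lattice (shifted by `(1/2, 1/2)`), with each dual edge
indexed by the primal edge it crosses. -/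
noncomputable def sqDualLattice : LatticeOn SqE :=
  ⟨fun e =>
    if e.2.2 then
      (((e.1 : ℝ) + 1 / 2, (e.2.1 : ℝ) - 1 / 2), ((e.1 : ℝ) + 1 / 2, (e.2.1 : ℝ) + 1 / 2))
    else
      (((e.1 : ℝ) - 1 / 2, (e.2.1 : ℝ) + 1 / 2), ((e.1 : ℝ) + 1 / 2, (e.2.1 : ℝ) + 1 / 2))⟩

/-- Vertices of the triangular lattice (equilateral triangles of side `√3`,
one family of edges horizontal). -/
noncomputable def tv (a b : ℤ) : Pt :=
  (Real.sqrt 3 * ((a : ℝ) + (b : ℝ) / 2), 3 / 2 * (b : ℝ))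

/-- The triangular lattice. -/
noncomputable def triLattice : LatticeOn TriE :=
  ⟨fun e =>
    if e.2.2 = 0 then (tv e.1 e.2.1, tv (e.1 + 1) e.2.1)
    else if e.2.2 = 1 then (tv (e.1 + 1) e.2.1, tv e.1 (e.2.1 + 1))
    else (tv e.1 e.2.1, tv e.1 (e.2.1 + 1))⟩

/-- Circumcentre of the upwards pointing triangle with base vertex `tv a b`. -/
noncomputable def hup (a b : ℤ) : Pt :=
  (Real.sqrt 3 * ((a : ℝ) + ((b : ℝ) + 1) / 2), 3 / 2 * (b : ℝ) + 1 / 2)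

/-- Circumcentre of the downwards pointing triangle below the edge `tv a b – tv (a+1) b`. -/
noncomputable def hdown (a b : ℤ) : Pt :=
  (Real.sqrt 3 * ((a : ℝ) + ((b : ℝ) + 1) / 2), 3 / 2 * (b : ℝ) - 1 / 2)

/-- The hexagonal lattice, the planar dual of `triLattice`, with vertices at the
circumcentres of the triangles; each hexagonal edge is indexed by the triangular
edge it crosses. -/
noncomputable def hexLattice : LatticeOn TriE :=
  ⟨fun e =>
    if e.2.2 = 0 then (hdown e.1 e.2.1, hup e.1 e.2.1)
    else if e.2.2 = 1 then (hup e.1 e.2.1, hdown e.1 (e.2.1 + 1))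
    else (hup e.1 e.2.1, hdown (e.1 - 1) (e.2.1 + 1))⟩

/-- The square lattice with horizontal edges of length `√3` and vertical edges of
length `1` (as in the mixed lattices). -/
noncomputable def sqStretch : LatticeOn SqE :=
  ⟨fun e =>
    if e.2.2 then
      ((Real.sqrt 3 * (e.1 : ℝ), (e.2.1 : ℝ)), (Real.sqrt 3 * ((e.1 : ℝ) + 1), (e.2.1 : ℝ)))
    else ((Real.sqrt 3 * (e.1 : ℝ), (e.2.1 : ℝ)), (Real.sqrt 3 * (e.1 : ℝ), (e.2.1 : ℝ) + 1))⟩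

/-- Vertices of the square lattice rotated by `π/4`. -/
noncomputable def rv (a b : ℤ) : Pt :=
  (((a : ℝ) - (b : ℝ)) / Real.sqrt 2, ((a : ℝ) + (b : ℝ)) / Real.sqrt 2)

/-- The square lattice rotated by `π/4`: edges `(a,b,true)` are inclined at angle `π/4`
and edges `(a,b,false)` at angle `3π/4`; the row (height) of such an edge is `a + b`. -/
noncomputable def rsqLattice : LatticeOn SqE :=
  ⟨fun e =>
    if e.2.2 then (rv e.1 e.2.1, rv (e.1 + 1) e.2.1)
    else (rv e.1 e.2.1, rv e.1 (e.2.1 + 1))⟩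

/-- Inhomogeneous intensities on the square lattice: `ph` on horizontal edges,
`pv` on vertical ones. -/
def sqInt (ph pv : ℝ) : SqE → ℝ := fun e => if e.2.2 then ph else pv

/-- Inhomogeneous intensities on the triangular (or hexagonal) lattice:
`p0` on class-0 edges, `p1` on class-1, `p2` on class-2. -/
def triInt (p0 p1 p2 : ℝ) : TriE → ℝ := fun e => ![p0, p1, p2] e.2.2

/-- Highly inhomogeneous intensities on the triangular (or hexagonal) lattice:
`p` on horizontal-class edges, `q n` on right edges of upwards pointing triangles at
height `n`, `q' n` on left edges of upwards pointing triangles at height `n`. -/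
def triHI (p : ℝ) (q q' : ℤ → ℝ) : TriE → ℝ := fun e =>
  if e.2.2 = 0 then p else if e.2.2 = 1 then q e.2.1 else q' e.2.1

/-- Highly inhomogeneous intensities on the rotated square lattice: `q n` on edges
inclined at `π/4` at height `n`, `q' n` on edges inclined at `3π/4` at height `n`. -/
def rsqHI (q q' : ℤ → ℝ) : SqE → ℝ := fun e =>
  if e.2.2 then q (e.1 + e.2.1) else q' (e.1 + e.2.1)


/-! Star–triangle transformation: the triangle graph `G` on `{A,B,C}` (vertices
`0,1,2 : Fin 3`) has edges indexed by `Fin 3`: edge `0 = BC`, `1 = CA`, `2 = AB`;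
edge `i` joins the two vertices distinct from `i`, i.e. vertices `u ≠ v` are joined
by edge `-(u+v)`.  The star graph `G'` on `{A,B,C,O}` (vertices `0,1,2,3 : Fin 4`,
with `O = 3`) has edges indexed by `Fin 3`: edge `i` is `O–i`. -/

/-- Connectivity in the triangle graph with configuration `ω`. -/
def triangleConn (ω : Fin 3 → Bool) : Fin 3 → Fin 3 → Prop :=
  Relation.ReflTransGen (fun u v => u ≠ v ∧ ω (-(u + v)) = true)

/-- Adjacency in the star graph with configuration `ω`: vertex `i < 3` is adjacent
to the centre `O = 3` when the spoke `O–i` is open. -/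
def starAdj (ω : Fin 3 → Bool) (u v : Fin 4) : Prop :=
  ∃ i : Fin 3, ω i = true ∧
    ((u = Fin.castSucc i ∧ v = 3) ∨ (u = 3 ∧ v = Fin.castSucc i))

/-- Connectivity in the star graph with configuration `ω`. -/
def starConn (ω : Fin 3 → Bool) : Fin 4 → Fin 4 → Prop :=
  Relation.ReflTransGen (starAdj ω)

/-- Probability of the configuration `ω` under independent edges with
intensities `p`. -/
def configWeight (p : Fin 3 → ℝ) (ω : Fin 3 → Bool) : ℝ :=
  ∏ i : Fin 3, if ω i then p i else 1 - p i

/-- Boolean connectivity matrix of the triangle graph. -/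
def tMat (ω : Fin 3 → Bool) : Fin 3 → Fin 3 → Bool :=
  fun x y => x == y || ω (-(x + y)) || (ω x && ω y)

/-- Boolean connectivity matrix of the star graph (all four vertices). -/
def sMat4 (ω : Fin 3 → Bool) : Fin 4 → Fin 4 → Bool :=
  fun u v => u == v || (![ω 0, ω 1, ω 2, true] u && ![ω 0, ω 1, ω 2, true] v)

/-- Boolean connectivity matrix of the star graph, restricted to outer vertices. -/
def sMat (ω : Fin 3 → Bool) : Fin 3 → Fin 3 → Bool :=
  fun x y => x == y || (ω x && ω y)

lemma ωcast (ω : Fin 3 → Bool) {i j : Fin 3} (h : i = j) (hi : ω i = true) :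
    ω j = true := h ▸ hi

lemma tMat_step : ∀ (ω : Fin 3 → Bool) (x b c : Fin 3), tMat ω x b = true →
    b ≠ c → ω (-(b + c)) = true → tMat ω x c = true := by decide

lemma triangleConn_iff (ω : Fin 3 → Bool) (x y : Fin 3) :
    triangleConn ω x y ↔ tMat ω x y = true := by
  constructor
  · intro h
    induction h with
    | refl => simp [tMat]
    | tail _ hbc ih => exact tMat_step ω _ _ _ ih hbc.1 hbc.2
  · intro h
    fin_cases x <;> fin_cases y <;>
      simp only [tMat, Fin.isValue, show ((0:Fin 3) == 0) = true from rfl,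
        Bool.true_or, Bool.or_eq_true, Bool.and_eq_true] at h ⊢
    all_goals first
      | exact Relation.ReflTransGen.refl
      | (rcases h with (h | h) | ⟨ha, hb⟩
         · exact absurd h (by decide)
         · exact Relation.ReflTransGen.single ⟨by decide, ωcast ω (by decide) h⟩
         · (first
             | refine Relation.ReflTransGen.head (b := 0) ⟨by decide, ?_⟩
                 (Relation.ReflTransGen.single ⟨by decide, ?_⟩)
             | refine Relation.ReflTransGen.head (b := 1) ⟨by decide, ?_⟩
                 (Relation.ReflTransGen.single ⟨by decide, ?_⟩)
             | refine Relation.ReflTransGen.head (b := 2) ⟨by decide, ?_⟩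
                 (Relation.ReflTransGen.single ⟨by decide, ?_⟩)) <;>
           first
             | exact ωcast ω (by decide) ha
             | exact ωcast ω (by decide) hb)

lemma sMat4_step : ∀ (ω : Fin 3 → Bool) (u b c : Fin 4) (i : Fin 3), ω i = true →
    ((b = Fin.castSucc i ∧ c = 3) ∨ (b = 3 ∧ c = Fin.castSucc i)) →
    sMat4 ω u b = true → sMat4 ω u c = true := by decide

lemma starConn_iff (ω : Fin 3 → Bool) (u v : Fin 4) :
    starConn ω u v ↔ sMat4 ω u v = true := by
  constructor
  · intro h
    induction h with
    | refl => simp [sMat4]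
    | tail _ hbc ih =>
        obtain ⟨i, hi, hor⟩ := hbc
        exact sMat4_step ω _ _ _ i hi hor ih
  · intro h
    fin_cases u <;> fin_cases v <;>
      simp only [sMat4, Matrix.cons_val_zero, Matrix.cons_val_one, Matrix.head_cons,
        Bool.or_eq_true, Bool.and_eq_true, beq_iff_eq] at h ⊢
    all_goals first
      | exact Relation.ReflTransGen.refl
      | (rcases h with h | ⟨ha, hb⟩
         · exact absurd h (by decide)
         · first
           | exact Relation.ReflTransGen.single ⟨0, ωcast ω (by decide) hb, by decide⟩
           | exact Relation.ReflTransGen.single ⟨1, ωcast ω (by decide) hb, by decide⟩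
           | exact Relation.ReflTransGen.single ⟨2, ωcast ω (by decide) hb, by decide⟩
           | exact Relation.ReflTransGen.single ⟨0, ωcast ω (by decide) ha, by decide⟩
           | exact Relation.ReflTransGen.single ⟨1, ωcast ω (by decide) ha, by decide⟩
           | exact Relation.ReflTransGen.single ⟨2, ωcast ω (by decide) ha, by decide⟩
           | (refine Relation.ReflTransGen.head (b := (3 : Fin 4)) ?_
                (Relation.ReflTransGen.single ?_)
              · first
                | exact ⟨0, ωcast ω (by decide) ha, by decide⟩
                | exact ⟨1, ωcast ω (by decide) ha, by decide⟩
                | exact ⟨2, ωcast ω (by decide) ha, by decide⟩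
              · first
                | exact ⟨0, ωcast ω (by decide) hb, by decide⟩
                | exact ⟨1, ωcast ω (by decide) hb, by decide⟩
                | exact ⟨2, ωcast ω (by decide) hb, by decide⟩))

lemma sMat4_castSucc : ∀ (ω : Fin 3 → Bool) (x y : Fin 3),
    sMat4 ω (Fin.castSucc x) (Fin.castSucc y) = sMat ω x y := by decide

lemma triangleCond_iff (ω : Fin 3 → Bool) (c : Fin 3 → Fin 3 → Bool) :
    (∀ x y : Fin 3, triangleConn ω x y ↔ c x y = true) ↔ tMat ω = c := by
  constructor
  · intro h
    funext x y
    have := (h x y).symm.trans (triangleConn_iff ω x y)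
    cases hc : c x y <;> cases ht : tMat ω x y <;> simp_all
  · intro h x y
    rw [triangleConn_iff, h]

lemma starCond_iff (ω : Fin 3 → Bool) (c : Fin 3 → Fin 3 → Bool) :
    (∀ x y : Fin 3, starConn ω (Fin.castSucc x) (Fin.castSucc y) ↔ c x y = true) ↔
      sMat ω = c := by
  constructor
  · intro h
    funext x y
    have := (h x y).symm.trans ((starConn_iff ω _ _).trans (by rw [sMat4_castSucc]))
    cases hc : c x y <;> cases ht : sMat ω x y <;> simp_all
  · intro h x y
    rw [starConn_iff, sMat4_castSucc, h]

open scoped Classical in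
lemma sum_config (g : (Fin 3 → Bool) → ℝ) :
    ∑ ω : Fin 3 → Bool, g ω =
      g ![false, false, false] + g ![false, false, true] + g ![false, true, false] +
      g ![false, true, true] + g ![true, false, false] + g ![true, false, true] +
      g ![true, true, false] + g ![true, true, true] := by
  let e : Bool × Bool × Bool ≃ (Fin 3 → Bool) :=
    { toFun := fun x => ![x.1, x.2.1, x.2.2]
      invFun := fun ω => (ω 0, ω 1, ω 2)
      left_inv := by rintro ⟨a, b, c⟩; rfl
      right_inv := by
        intro ω; funext i; fin_cases i <;> rfl }
  rw [← Fintype.sum_equiv e (fun x => g (e x)) g (fun x => rfl)]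
  rw [Fintype.sum_prod_type, Fintype.sum_bool]
  simp only [Fintype.sum_prod_type, Fintype.sum_bool, e, Equiv.coe_fn_mk]
  ring

/-- Diagonal connectivity matrix: nothing connected. -/
def mId : Fin 3 → Fin 3 → Bool := fun x y => x == y

/-- Full connectivity matrix. -/
def mFull : Fin 3 → Fin 3 → Bool := fun _ _ => true

/-- Only the pair avoiding `i` is connected. -/
def mPair (i : Fin 3) : Fin 3 → Fin 3 → Bool := fun x y => x == y || (x != i && y != i)

lemma tMat_eval :
    tMat ![false, false, false] = mId ∧ tMat ![false, false, true] = mPair 2 ∧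
    tMat ![false, true, false] = mPair 1 ∧ tMat ![false, true, true] = mFull ∧
    tMat ![true, false, false] = mPair 0 ∧ tMat ![true, false, true] = mFull ∧
    tMat ![true, true, false] = mFull ∧ tMat ![true, true, true] = mFull := by decide

lemma sMat_eval :
    sMat ![false, false, false] = mId ∧ sMat ![false, false, true] = mId ∧
    sMat ![false, true, false] = mId ∧ sMat ![false, true, true] = mPair 0 ∧
    sMat ![true, false, false] = mId ∧ sMat ![true, false, true] = mPair 1 ∧
    sMat ![true, true, false] = mPair 2 ∧ sMat ![true, true, true] = mFull := by decide

lemma configWeight_eval (q0 q1 q2 : ℝ) (b0 b1 b2 : Bool) :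
    configWeight ![q0, q1, q2] ![b0, b1, b2] =
      (if b0 then q0 else 1 - q0) * ((if b1 then q1 else 1 - q1) *
        (if b2 then q2 else 1 - q2)) := by
  simp [configWeight, Fin.prod_univ_three, mul_assoc]
  cases b0 <;> cases b1 <;> cases b2 <;> simp

open scoped Classical in
/-- **star–triangle transformation.** If `κ_△(p0,p1,p2) = 0` with
`p ∈ [0,1)³`, then the vector of connectivity indicators between `A`, `B`, `C` in the
triangle (edges open with probabilities `p0, p1, p2`) has the same law as the
corresponding vector for the star (spokes open with probabilities
`1-p0, 1-p1, 1-p2`). -/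
theorem star_triangle_same_law (p0 p1 p2 : ℝ)
    (h0 : p0 ∈ Set.Ico (0 : ℝ) 1) (h1 : p1 ∈ Set.Ico (0 : ℝ) 1)
    (h2 : p2 ∈ Set.Ico (0 : ℝ) 1) (hκ : kappaT p0 p1 p2 = 0) :
    ∀ c : Fin 3 → Fin 3 → Bool,
      (∑ ω : Fin 3 → Bool,
          if (∀ x y : Fin 3, triangleConn ω x y ↔ c x y = true) then
            configWeight ![p0, p1, p2] ω else 0) =
      (∑ ω : Fin 3 → Bool,
          if (∀ x y : Fin 3, starConn ω (Fin.castSucc x) (Fin.castSucc y) ↔ c x y = true) then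
            configWeight ![1 - p0, 1 - p1, 1 - p2] ω else 0) := by
  have hκ' : p0 + p1 + p2 - p0 * p1 * p2 - 1 = 0 := by simpa [kappaT] using hκ
  intro c
  simp only [triangleCond_iff, starCond_iff]
  rw [sum_config, sum_config]
  simp only [tMat_eval.1, tMat_eval.2.1, tMat_eval.2.2.1, tMat_eval.2.2.2.1,
    tMat_eval.2.2.2.2.1, tMat_eval.2.2.2.2.2.1, tMat_eval.2.2.2.2.2.2.1,
    tMat_eval.2.2.2.2.2.2.2, sMat_eval.1, sMat_eval.2.1, sMat_eval.2.2.1,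
    sMat_eval.2.2.2.1, sMat_eval.2.2.2.2.1, sMat_eval.2.2.2.2.2.1,
    sMat_eval.2.2.2.2.2.2.1, sMat_eval.2.2.2.2.2.2.2, configWeight_eval,
    if_true, if_false, Bool.false_eq_true]
  split_ifs <;>
  try first
    | exact absurd ((‹mId = c›).trans (‹mPair 0 = c›).symm) (by decide)
    | exact absurd ((‹mId = c›).trans (‹mPair 1 = c›).symm) (by decide)
    | exact absurd ((‹mId = c›).trans (‹mPair 2 = c›).symm) (by decide)
    | exact absurd ((‹mId = c›).trans (‹mFull = c›).symm) (by decide)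
    | exact absurd ((‹mPair 0 = c›).trans (‹mPair 1 = c›).symm) (by decide)
    | exact absurd ((‹mPair 0 = c›).trans (‹mPair 2 = c›).symm) (by decide)
    | exact absurd ((‹mPair 0 = c›).trans (‹mFull = c›).symm) (by decide)
    | exact absurd ((‹mPair 1 = c›).trans (‹mPair 2 = c›).symm) (by decide)
    | exact absurd ((‹mPair 1 = c›).trans (‹mFull = c›).symm) (by decide)
    | exact absurd ((‹mPair 2 = c›).trans (‹mFull = c›).symm) (by decide)
  all_goals first
    | ring1
    | linear_combination hκ'
    | linear_combination -hκ'

end Perc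
end

section
/- Let p = (p0,p1,p2) ∈ [0,1)³ satisfy κ_△(p) = 0, and consider the triangle graph G on {A,B,C} (edges BC, CA, AB open independently with probabilities p0, p1, p2) and the star graph G' on {A,B,C,O} (edges OA, OB, OC open independently with probabilities 1−p0, 1−p1, 1−p2). Then there exists a coupling of the two percolation measures, i.e., a probability measure μ on {0,1}^{E(G)} × {0,1}^{E(G')} whose first marginal is the triangle product measure and whose second marginal is the star product measure, such that μ-almost surely, for all x, y ∈ {A,B,C}, x ↔ y in the first (triangle) configuration if and only if x ↔ y in the second (star) configuration. -/
open MeasureTheory Set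

set_option linter.unusedVariables false

namespace Perc

/-- The Bernoulli product measure on configurations of three edges with
intensities `p`. -/
noncomputable def threeEdgeMeasure (p : Fin 3 → ℝ) : Measure (Fin 3 → Bool) :=
  ∑ ω : Fin 3 → Bool, ENNReal.ofReal (configWeight p ω) • Measure.dirac ω


/-! Auxiliary machinery for the star–triangle coupling. -/

/-- Number of open edges. -/
def cnt (ω : Fin 3 → Bool) : ℕ := (ω 0).toNat + (ω 1).toNat + (ω 2).toNat

/-- Coupling weight. -/
noncomputable def wgt (p0 p1 p2 : ℝ) (σ : (Fin 3 → Bool) × (Fin 3 → Bool)) : ℝ :=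
  if cnt σ.1 = 1 ∧ σ.2 = (fun i => !σ.1 i) then configWeight ![p0,p1,p2] σ.1
  else if 2 ≤ cnt σ.1 ∧ σ.2 = (fun _ => true) then configWeight ![p0,p1,p2] σ.1
  else if σ.1 = (fun _ => false) ∧ cnt σ.2 ≤ 1 then configWeight ![1-p0,1-p1,1-p2] σ.2
  else 0

def be : Bool × Bool × Bool ≃ (Fin 3 → Bool) where
  toFun t := ![t.1, t.2.1, t.2.2]
  invFun ω := (ω 0, ω 1, ω 2)
  left_inv := by rintro ⟨a,b,c⟩; rfl
  right_inv := by intro ω; funext i; fin_cases i <;> rfl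

lemma sum_expand (f : (Fin 3 → Bool) → ℝ) :
    ∑ ω : Fin 3 → Bool, f ω = ∑ t : Bool × Bool × Bool, f ![t.1, t.2.1, t.2.2] :=
  (Fintype.sum_equiv be _ _ (fun _ => rfl)).symm

lemma fin3_aux : ∀ x y : Fin 3, x ≠ y →
    x ≠ -(x+y) ∧ -(x+y) ≠ y ∧ -(x + -(x+y)) = y ∧ -(-(x+y) + y) = x := by decide

lemma tri_iff (ω : Fin 3 → Bool) (x y : Fin 3) :
    triangleConn ω x y ↔ (x = y ∨ ω (-(x+y)) = true ∨ (ω x = true ∧ ω y = true)) := by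
  constructor
  · intro h
    induction h with
    | refl => exact Or.inl rfl
    | @tail b c h₁ h₂ ih =>
      obtain ⟨hne, he⟩ := h₂
      fin_cases x <;> fin_cases b <;> fin_cases c <;> simp_all <;> tauto
  · intro h
    by_cases hxy : x = y
    · exact hxy ▸ Relation.ReflTransGen.refl
    rcases h with h | h | ⟨hx, hy⟩
    · exact absurd h hxy
    · exact Relation.ReflTransGen.single ⟨hxy, h⟩
    · obtain ⟨a1, a2, a3, a4⟩ := fin3_aux x y hxy
      exact Relation.ReflTransGen.head ⟨a1, by rw [a3]; exact hy⟩
        (Relation.ReflTransGen.single ⟨a2, by rw [a4]; exact hx⟩)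

def sp (ω : Fin 3 → Bool) : Fin 4 → Bool := Fin.lastCases true ω

lemma sp_castSucc (ω : Fin 3 → Bool) (i : Fin 3) : sp ω (Fin.castSucc i) = ω i :=
  Fin.lastCases_castSucc ..

lemma sp_three (ω : Fin 3 → Bool) : sp ω 3 = true := Fin.lastCases_last ..

lemma star_iff (ω : Fin 3 → Bool) (u v : Fin 4) :
    starConn ω u v ↔ (u = v ∨ (sp ω u = true ∧ sp ω v = true)) := by
  constructor
  · intro h
    induction h with
    | refl => exact Or.inl rfl
    | @tail b c h₁ h₂ ih =>
      obtain ⟨i, hi, hc⟩ := h₂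
      have hb : sp ω b = true := by
        rcases hc with ⟨rfl, rfl⟩ | ⟨rfl, rfl⟩
        · rw [sp_castSucc]; exact hi
        · exact sp_three ω
      have hcc : sp ω c = true := by
        rcases hc with ⟨rfl, rfl⟩ | ⟨rfl, rfl⟩
        · exact sp_three ω
        · rw [sp_castSucc]; exact hi
      rcases ih with rfl | ⟨h1, h2⟩
      · exact Or.inr ⟨hb, hcc⟩
      · exact Or.inr ⟨h1, hcc⟩
  · intro h
    rcases h with rfl | ⟨hu, hv⟩
    · exact Relation.ReflTransGen.refl
    by_cases huv : u = v
    · exact huv ▸ Relation.ReflTransGen.refl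
    induction u using Fin.lastCases with
    | last =>
      have hvne : v ≠ Fin.last 3 := fun h => huv (h ▸ rfl)
      obtain ⟨j, rfl⟩ := Fin.exists_castSucc_eq.mpr hvne
      rw [sp_castSucc] at hv
      exact Relation.ReflTransGen.single ⟨j, hv, Or.inr ⟨by decide, rfl⟩⟩
    | cast i =>
      rw [sp_castSucc] at hu
      induction v using Fin.lastCases with
      | last =>
        exact Relation.ReflTransGen.single ⟨i, hu, Or.inl ⟨rfl, by decide⟩⟩
      | cast j =>
        rw [sp_castSucc] at hv
        exact Relation.ReflTransGen.head ⟨i, hu, Or.inl ⟨rfl, rfl⟩⟩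
          (Relation.ReflTransGen.single ⟨j, hv, Or.inr ⟨rfl, rfl⟩⟩)

set_option maxHeartbeats 1000000 in
lemma bool_match : ∀ ω ω' : Fin 3 → Bool,
    ((cnt ω = 1 ∧ ω' = fun i => !ω i) ∨ (2 ≤ cnt ω ∧ ω' = fun _ => true) ∨
      (ω = (fun _ => false) ∧ cnt ω' ≤ 1)) →
    ∀ x y : Fin 3, ((x = y ∨ ω (-(x+y)) = true ∨ (ω x = true ∧ ω y = true)) ↔
      (x = y ∨ (ω' x = true ∧ ω' y = true))) := by decide

lemma L1 {p0 p1 p2 : ℝ} (hκ : kappaT p0 p1 p2 = 0) (ω : Fin 3 → Bool) :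
    ∑ ω' : Fin 3 → Bool, wgt p0 p1 p2 (ω, ω') = configWeight ![p0,p1,p2] ω := by
  have hη : ω = ![ω 0, ω 1, ω 2] := by funext i; fin_cases i <;> rfl
  rw [hη]
  simp only [kappaT] at hκ
  rcases ω 0 <;> rcases ω 1 <;> rcases ω 2 <;>
    · rw [sum_expand]
      simp +decide [Fintype.sum_prod_type, wgt, configWeight, Fin.prod_univ_succ]
      try ring_nf
      try linarith

lemma L2 {p0 p1 p2 : ℝ} (hκ : kappaT p0 p1 p2 = 0) (ω' : Fin 3 → Bool) :
    ∑ ω : Fin 3 → Bool, wgt p0 p1 p2 (ω, ω') = configWeight ![1-p0,1-p1,1-p2] ω' := by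
  have hη : ω' = ![ω' 0, ω' 1, ω' 2] := by funext i; fin_cases i <;> rfl
  rw [hη]
  simp only [kappaT] at hκ
  rcases ω' 0 <;> rcases ω' 1 <;> rcases ω' 2 <;>
    · rw [sum_expand]
      simp +decide [Fintype.sum_prod_type, wgt, configWeight, Fin.prod_univ_succ]
      try ring_nf
      try linarith

lemma sum_cw_one {p0 p1 p2 : ℝ} :
    ∑ ω : Fin 3 → Bool, configWeight ![p0,p1,p2] ω = 1 := by
  rw [sum_expand]
  simp [Fintype.sum_prod_type, configWeight, Fin.prod_univ_succ]
  ring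

lemma cw_nonneg {p : Fin 3 → ℝ} (hp : ∀ i, 0 ≤ p i ∧ p i ≤ 1) (ω : Fin 3 → Bool) :
    0 ≤ configWeight p ω := by
  refine Finset.prod_nonneg fun i _ => ?_
  split
  · exact (hp i).1
  · linarith [(hp i).2]

lemma wgt_nonneg {p0 p1 p2 : ℝ} (h0 : p0 ∈ Set.Ico (0:ℝ) 1) (h1 : p1 ∈ Set.Ico (0:ℝ) 1)
    (h2 : p2 ∈ Set.Ico (0:ℝ) 1) (σ : (Fin 3 → Bool) × (Fin 3 → Bool)) :
    0 ≤ wgt p0 p1 p2 σ := by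
  have hp : ∀ i, 0 ≤ (![p0,p1,p2] : Fin 3 → ℝ) i ∧ (![p0,p1,p2] : Fin 3 → ℝ) i ≤ 1 := by
    intro i; fin_cases i <;>
      simp <;> constructor <;> linarith [h0.1, h0.2, h1.1, h1.2, h2.1, h2.2]
  have hq : ∀ i, 0 ≤ (![1-p0,1-p1,1-p2] : Fin 3 → ℝ) i ∧
      (![1-p0,1-p1,1-p2] : Fin 3 → ℝ) i ≤ 1 := by
    intro i; fin_cases i <;>
      simp <;> constructor <;> linarith [h0.1, h0.2, h1.1, h1.2, h2.1, h2.2]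
  unfold wgt
  split
  · exact cw_nonneg hp _
  split
  · exact cw_nonneg hp _
  split
  · exact cw_nonneg hq _
  · exact le_refl _

lemma wgt_support {p0 p1 p2 : ℝ} (σ : (Fin 3 → Bool) × (Fin 3 → Bool))
    (h : wgt p0 p1 p2 σ ≠ 0) :
    (cnt σ.1 = 1 ∧ σ.2 = fun i => !σ.1 i) ∨ (2 ≤ cnt σ.1 ∧ σ.2 = fun _ => true) ∨
      (σ.1 = (fun _ => false) ∧ cnt σ.2 ≤ 1) := by
  by_contra hc
  simp only [not_or] at hc
  apply h
  unfold wgt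
  rw [if_neg hc.1, if_neg hc.2.1, if_neg hc.2.2]

/-- **star–triangle coupling.** If `κ_△(p0,p1,p2) = 0` with
`p ∈ [0,1)³`, there is a coupling `μ` of the triangle measure (edge probabilities
`p0, p1, p2`) and the star measure (spoke probabilities `1-p0, 1-p1, 1-p2`) under
which, almost surely, any two of `A`, `B`, `C` are connected in the triangle
configuration if and only if they are connected in the star configuration. -/
theorem star_triangle_coupling (p0 p1 p2 : ℝ)
    (h0 : p0 ∈ Set.Ico (0 : ℝ) 1) (h1 : p1 ∈ Set.Ico (0 : ℝ) 1)
    (h2 : p2 ∈ Set.Ico (0 : ℝ) 1) (hκ : kappaT p0 p1 p2 = 0) :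
    ∃ μ : Measure ((Fin 3 → Bool) × (Fin 3 → Bool)),
      IsProbabilityMeasure μ ∧
      μ.map Prod.fst = threeEdgeMeasure ![p0, p1, p2] ∧
      μ.map Prod.snd = threeEdgeMeasure ![1 - p0, 1 - p1, 1 - p2] ∧
      μ {σ | ∀ x y : Fin 3,
          triangleConn σ.1 x y ↔ starConn σ.2 (Fin.castSucc x) (Fin.castSucc y)} = 1 := by
  classical
  set X := Fin 3 → Bool
  set w : X × X → ℝ := wgt p0 p1 p2 with hw
  set μ : Measure (X × X) :=
    ∑ σ : X × X, ENNReal.ofReal (w σ) • Measure.dirac σ with hμ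
  have hwnn : ∀ σ, 0 ≤ w σ := wgt_nonneg h0 h1 h2
  have mu_apply : ∀ s : Set (X × X),
      μ s = ∑ σ : X × X, ENNReal.ofReal (w σ) * s.indicator 1 σ := by
    intro s
    rw [hμ, Measure.finset_sum_apply]
    refine Finset.sum_congr rfl fun σ _ => ?_
    rw [Measure.smul_apply, Measure.dirac_apply, smul_eq_mul]
  have te_apply : ∀ (p : Fin 3 → ℝ) (s : Set X),
      threeEdgeMeasure p s = ∑ ω : X, ENNReal.ofReal (configWeight p ω) * s.indicator 1 ω := by
    intro p s
    rw [threeEdgeMeasure, Measure.finset_sum_apply]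
    refine Finset.sum_congr rfl fun ω _ => ?_
    rw [Measure.smul_apply, Measure.dirac_apply, smul_eq_mul]
  have key1 : ∀ ω : X, ∑ ω' : X, ENNReal.ofReal (w (ω, ω'))
      = ENNReal.ofReal (configWeight ![p0,p1,p2] ω) := by
    intro ω
    rw [← ENNReal.ofReal_sum_of_nonneg (fun ω' _ => hwnn (ω, ω')), L1 hκ]
  have key2 : ∀ ω' : X, ∑ ω : X, ENNReal.ofReal (w (ω, ω'))
      = ENNReal.ofReal (configWeight ![1-p0,1-p1,1-p2] ω') := by
    intro ω'
    rw [← ENNReal.ofReal_sum_of_nonneg (fun ω _ => hwnn (ω, ω')), L2 hκ]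
  have hmap1 : μ.map Prod.fst = threeEdgeMeasure ![p0, p1, p2] := by
    refine Measure.ext fun s hs => ?_
    rw [Measure.map_apply measurable_fst hs, mu_apply, te_apply]
    rw [Fintype.sum_prod_type]
    refine Finset.sum_congr rfl fun ω _ => ?_
    have : ∀ ω' : X, (Prod.fst ⁻¹' s).indicator (1 : X × X → ENNReal) (ω, ω')
        = s.indicator 1 ω := by
      intro ω'
      simp [Set.indicator_apply, Set.mem_preimage]
    simp_rw [this]
    rw [← Finset.sum_mul, key1]
  have hmap2 : μ.map Prod.snd = threeEdgeMeasure ![1 - p0, 1 - p1, 1 - p2] := by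
    refine Measure.ext fun s hs => ?_
    rw [Measure.map_apply measurable_snd hs, mu_apply, te_apply]
    rw [Fintype.sum_prod_type_right]
    refine Finset.sum_congr rfl fun ω' _ => ?_
    have : ∀ ω : X, (Prod.snd ⁻¹' s).indicator (1 : X × X → ENNReal) (ω, ω')
        = s.indicator 1 ω' := by
      intro ω
      simp [Set.indicator_apply, Set.mem_preimage]
    simp_rw [this]
    rw [← Finset.sum_mul, key2]
  have htot : ∑ σ : X × X, ENNReal.ofReal (w σ) = 1 := by
    rw [Fintype.sum_prod_type]
    simp_rw [key1]
    rw [← ENNReal.ofReal_sum_of_nonneg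
      (fun ω _ => cw_nonneg (p := ![p0,p1,p2]) (fun i => by
        fin_cases i <;> simp <;>
          first
            | (constructor <;> linarith [h0.1, h0.2.le])
            | (constructor <;> linarith [h1.1, h1.2.le])
            | (constructor <;> linarith [h2.1, h2.2.le])) ω),
      sum_cw_one, ENNReal.ofReal_one]
  have hprob : IsProbabilityMeasure μ := by
    constructor
    rw [mu_apply]
    simp only [Set.indicator_univ, Pi.one_apply, mul_one]
    exact htot
  refine ⟨μ, hprob, hmap1, hmap2, ?_⟩
  set A : Set (X × X) := {σ | ∀ x y : Fin 3,
      triangleConn σ.1 x y ↔ starConn σ.2 (Fin.castSucc x) (Fin.castSucc y)} with hA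
  have hAmem : ∀ σ : X × X, w σ ≠ 0 → σ ∈ A := by
    intro σ hσ x y
    rw [tri_iff, star_iff, sp_castSucc, sp_castSucc, Fin.castSucc_inj]
    exact bool_match σ.1 σ.2 (wgt_support σ hσ) x y
  rw [mu_apply]
  calc ∑ σ : X × X, ENNReal.ofReal (w σ) * A.indicator 1 σ
      = ∑ σ : X × X, ENNReal.ofReal (w σ) := by
        refine Finset.sum_congr rfl fun σ _ => ?_
        by_cases hσA : σ ∈ A
        · rw [Set.indicator_of_mem hσA, Pi.one_apply, mul_one]
        · have hw0 : w σ = 0 := by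
            by_contra h
            exact hσA (hAmem σ h)
          rw [hw0, ENNReal.ofReal_zero, zero_mul]
    _ = 1 := htot


end Perc
end
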